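/- For every t ≥ 0 and every x = (x₀, x₁) ∈ H, the Bochner integral Q_t x := ∫₀ᵗ S(s) G G^* S(s)^* x ds (where S(s)^* is the Hilbert adjoint of S(s) and G^* the adjoint of G) equals (Q⁰_t x₀, 0), where Q⁰_t := ∫₀ᵗ e^{s a₀} σ σᵀ e^{s a₀ᵀ} ds. In particular the range of Q_t is contained in ℝⁿ × {0}. -/

import Mathlib

open MeasureTheory Matrix
open scoped RealInnerProductSpace

lemma inner_toEuclideanLin' {m p : ℕ} (A : Matrix (Fin m) (Fin p) ℝ)
    (v : EuclideanSpace ℝ (Fin p)) (w : EuclideanSpace ℝ (Fin m)) :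
    ⟪Matrix.toEuclideanLin A v, w⟫ = ⟪v, Matrix.toEuclideanLin Aᵀ w⟫ := by
  have : Aᵀ = Aᴴ := Matrix.ext fun i j => (star_trivial _).symm
  rw [this, Matrix.toEuclideanLin_conjTranspose_eq_adjoint, LinearMap.adjoint_inner_right]

section Cont
attribute [local instance] Matrix.linftyOpNormedRing Matrix.linftyOpNormedAlgebra

lemma cont_exp_entry' {n : ℕ} (a₀ : Matrix (Fin n) (Fin n) ℝ) (i j : Fin n) :
    Continuous fun s : ℝ => (NormedSpace.exp (s • a₀)) i j := by
  have h1 : Continuous fun s : ℝ => NormedSpace.exp (s • a₀) :=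
    NormedSpace.exp_continuous.comp (continuous_id.smul continuous_const)
  exact ((continuous_apply j).comp (continuous_apply i)).comp h1
end Cont

lemma cont_entry_mul' {p q r : ℕ} {A : ℝ → Matrix (Fin p) (Fin q) ℝ}
    {B : ℝ → Matrix (Fin q) (Fin r) ℝ}
    (hA : ∀ i j, Continuous fun s => A s i j) (hB : ∀ i j, Continuous fun s => B s i j) :
    ∀ i j, Continuous fun s => (A s * B s) i j := by
  intro i j
  simp only [Matrix.mul_apply]
  exact continuous_finset_sum _ fun l _ => (hA i l).mul (hB l j)

lemma toEuclideanLin_comp' {m p q : ℕ} (A : Matrix (Fin m) (Fin p) ℝ)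
    (B : Matrix (Fin p) (Fin q) ℝ) (v : EuclideanSpace ℝ (Fin q)) :
    Matrix.toEuclideanLin A (Matrix.toEuclideanLin B v) = Matrix.toEuclideanLin (A * B) v := by
  simp [Matrix.toEuclideanLin_apply, Matrix.mulVec_mulVec]

lemma indicator_shift_zero' {n : ℕ} {d : ℝ} (s : ℝ) (hs : 0 ≤ s)
    (f : Lp (EuclideanSpace ℝ (Fin n)) 2 (volume.restrict (Set.Icc (-d) (0:ℝ))))
    (hf : ⇑f =ᵐ[volume.restrict (Set.Icc (-d) (0:ℝ))] 0) :
    Set.indicator (Set.Icc (-d + s) 0) (fun r => f (r - s))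
      =ᵐ[volume.restrict (Set.Icc (-d) (0:ℝ))] 0 := by
  have hz : volume.restrict (Set.Icc (-d) (0:ℝ)) {a | ¬ f a = 0} = 0 := by
    rw [← ae_iff]; filter_upwards [hf] with a ha using by simpa using ha
  obtain ⟨N, hNsub, hNmeas, hNnull⟩ := exists_measurable_superset_of_null hz
  have hvolN : volume (N ∩ Set.Icc (-d) (0:ℝ)) = 0 := by
    rw [← Measure.restrict_apply hNmeas]; exact hNnull
  have hshift : volume ((fun r : ℝ => r - s) ⁻¹' (N ∩ Set.Icc (-d) (0:ℝ))) = 0 := by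
    have heq : (fun r : ℝ => r - s) = fun r : ℝ => r + (-s) := by funext r; ring
    rw [heq, measure_preimage_add_right]
    exact hvolN
  have hae : ∀ᵐ r ∂volume, r ∉ (fun r : ℝ => r - s) ⁻¹' (N ∩ Set.Icc (-d) (0:ℝ)) :=
    measure_eq_zero_iff_ae_notMem.mp hshift
  have hae' : ∀ᵐ r ∂(volume.restrict (Set.Icc (-d) (0:ℝ))),
      r ∉ (fun r : ℝ => r - s) ⁻¹' (N ∩ Set.Icc (-d) (0:ℝ)) :=
    hae.filter_mono (ae_mono Measure.restrict_le_self)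
  filter_upwards [hae'] with r hr
  by_cases hrmem : r ∈ Set.Icc (-d + s) 0
  · have h1 : r - s ∈ Set.Icc (-d) (0:ℝ) :=
      ⟨by linarith [hrmem.1], by linarith [hrmem.2]⟩
    have h3 : f (r - s) = 0 := by
      by_contra hc
      exact hr ⟨hNsub hc, h1⟩
    simp [Set.indicator_of_mem hrmem, h3]
  · simp [Set.indicator_of_notMem hrmem]

/-- For the delay semigroup `S(s)` on `H = ℝⁿ × L²([-d,0];ℝⁿ)` and the noise operator
`G y = (σ y, 0)`, the covariance `Q_t x = ∫₀ᵗ S(s) G G^* S(s)^* x ds` equals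
`(Q⁰_t x₀, 0)` with `Q⁰_t = ∫₀ᵗ e^{s a₀} σ σᵀ e^{s a₀ᵀ} ds`; in particular the range of
`Q_t` is contained in `ℝⁿ × {0}`.  Here `S'` is the Hilbert adjoint of `S` and `G'` the
Hilbert adjoint of `G`, characterized by the inner-product identities below, and the
inner product on `H` is the sum of the inner products of the components. -/
theorem delay_covariance_eq
    (n k : ℕ) (d : ℝ) (hd : 0 < d) (a₀ : Matrix (Fin n) (Fin n) ℝ)
    (σ : Matrix (Fin n) (Fin k) ℝ)
    (S S' : ℝ →
      ((EuclideanSpace ℝ (Fin n) ×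
          Lp (EuclideanSpace ℝ (Fin n)) 2 (volume.restrict (Set.Icc (-d) (0:ℝ)))) →ₗ[ℝ]
        (EuclideanSpace ℝ (Fin n) ×
          Lp (EuclideanSpace ℝ (Fin n)) 2 (volume.restrict (Set.Icc (-d) (0:ℝ))))))
    (G' : (EuclideanSpace ℝ (Fin n) ×
          Lp (EuclideanSpace ℝ (Fin n)) 2 (volume.restrict (Set.Icc (-d) (0:ℝ)))) →ₗ[ℝ]
        EuclideanSpace ℝ (Fin k))
    (hS1 : ∀ s : ℝ, 0 ≤ s → ∀ x, (S s x).1 =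
      Matrix.toEuclideanLin (NormedSpace.exp (s • a₀)) x.1 +
        ∫ u in Set.Icc (-d) (0:ℝ),
          Set.indicator (Set.Icc (-s) 0)
            (fun r => Matrix.toEuclideanLin (NormedSpace.exp ((s + r) • a₀)) (x.2 r)) u)
    (hS2 : ∀ s : ℝ, 0 ≤ s → ∀ x, (S s x).2 =ᵐ[volume.restrict (Set.Icc (-d) (0:ℝ))]
      Set.indicator (Set.Icc (-d + s) 0) (fun r => x.2 (r - s)))
    (hS' : ∀ s : ℝ, 0 ≤ s → ∀ x z,
      ⟪(S s x).1, z.1⟫ + ⟪(S s x).2, z.2⟫ = ⟪x.1, (S' s z).1⟫ + ⟪x.2, (S' s z).2⟫)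
    (hG' : ∀ (y : EuclideanSpace ℝ (Fin k))
        (x : EuclideanSpace ℝ (Fin n) ×
          Lp (EuclideanSpace ℝ (Fin n)) 2 (volume.restrict (Set.Icc (-d) (0:ℝ)))),
      ⟪Matrix.toEuclideanLin σ y, x.1⟫ = ⟪y, G' x⟫)
    (t : ℝ) (ht : 0 ≤ t) :
    (∀ x : EuclideanSpace ℝ (Fin n) ×
        Lp (EuclideanSpace ℝ (Fin n)) 2 (volume.restrict (Set.Icc (-d) (0:ℝ))),
      (∫ s in (0:ℝ)..t,
          S s (Matrix.toEuclideanLin σ (G' (S' s x)), 0)) =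
        (Matrix.toEuclideanLin
          (Matrix.of fun i j => ∫ s in (0:ℝ)..t,
            (NormedSpace.exp (s • a₀) * σ * σᵀ * NormedSpace.exp (s • a₀ᵀ)) i j) x.1,
         0)) ∧
    Set.range (fun x : EuclideanSpace ℝ (Fin n) ×
        Lp (EuclideanSpace ℝ (Fin n)) 2 (volume.restrict (Set.Icc (-d) (0:ℝ))) =>
      ∫ s in (0:ℝ)..t, S s (Matrix.toEuclideanLin σ (G' (S' s x)), 0)) ⊆
      {p : EuclideanSpace ℝ (Fin n) ×
        Lp (EuclideanSpace ℝ (Fin n)) 2 (volume.restrict (Set.Icc (-d) (0:ℝ))) | p.2 = 0} := by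
  have hμ : True := trivial
  -- Lemma A : S s (v, 0) = (e^{s a₀} v, 0)
  have keyS : ∀ s : ℝ, 0 ≤ s → ∀ v : EuclideanSpace ℝ (Fin n),
      S s (v, 0) = (Matrix.toEuclideanLin (NormedSpace.exp (s • a₀)) v, 0) := by
    intro s hs v
    have hz := Lp.coeFn_zero (EuclideanSpace ℝ (Fin n)) 2 (volume.restrict (Set.Icc (-d) (0:ℝ)))
    have h2 : (S s (v, 0)).2 = 0 := by
      apply Lp.ext
      refine ((hS2 s hs (v, 0)).trans ?_).trans hz.symm
      exact indicator_shift_zero' s hs 0 hz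
    have h1 : (S s (v, 0)).1 = Matrix.toEuclideanLin (NormedSpace.exp (s • a₀)) v := by
      rw [hS1 s hs (v, 0)]
      have hzero : (∫ u in Set.Icc (-d) (0:ℝ),
          Set.indicator (Set.Icc (-s) 0)
            (fun r => Matrix.toEuclideanLin (NormedSpace.exp ((s + r) • a₀))
              (((v, 0) : EuclideanSpace ℝ (Fin n) ×
                Lp (EuclideanSpace ℝ (Fin n)) 2 (volume.restrict (Set.Icc (-d) (0:ℝ)))).2 r)) u)
          = 0 := by
        apply integral_eq_zero_of_ae
        have hfn : (fun r => Matrix.toEuclideanLin (NormedSpace.exp ((s + r) • a₀))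
            (((v, 0) : EuclideanSpace ℝ (Fin n) ×
              Lp (EuclideanSpace ℝ (Fin n)) 2 (volume.restrict (Set.Icc (-d) (0:ℝ)))).2 r))
            =ᵐ[volume.restrict (Set.Icc (-d) (0:ℝ))] (fun _ => 0) := by
          filter_upwards [hz] with r hr
          rw [hr]
          simp
        filter_upwards [hfn] with u hu
        by_cases h : u ∈ Set.Icc (-s) (0:ℝ)
        · simpa [Set.indicator_of_mem h] using hu
        · simp [Set.indicator_of_notMem h]
      rw [hzero, add_zero]
    exact Prod.ext h1 h2
  -- G' is multiplication by σᵀ on the first component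
  have hG'x : ∀ x, G' x = Matrix.toEuclideanLin σᵀ x.1 := by
    intro x
    refine ext_inner_left ℝ fun y => ?_
    rw [← hG' y x, inner_toEuclideanLin']
  -- (S' s x).1 = (e^{s a₀})ᵀ x.1
  have hS'x : ∀ s : ℝ, 0 ≤ s → ∀ x,
      (S' s x).1 = Matrix.toEuclideanLin (NormedSpace.exp (s • a₀))ᵀ x.1 := by
    intro s hs x
    refine (ext_inner_left ℝ fun v => ?_).symm
    have h := hS' s hs (v, 0) x
    rw [keyS s hs v] at h
    simp only [inner_zero_left, add_zero] at h
    rw [inner_toEuclideanLin'] at h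
    exact h
  -- the combined integrand
  set M : ℝ → Matrix (Fin n) (Fin n) ℝ := fun s =>
    NormedSpace.exp (s • a₀) * σ * σᵀ * NormedSpace.exp (s • a₀ᵀ) with hM
  have hMcont : ∀ i j, Continuous fun s => M s i j := by
    have he : ∀ i j, Continuous fun s : ℝ => (NormedSpace.exp (s • a₀)) i j :=
      cont_exp_entry' a₀
    have he' : ∀ i j, Continuous fun s : ℝ => (NormedSpace.exp (s • a₀ᵀ)) i j :=
      cont_exp_entry' a₀ᵀ
    have hc1 := cont_entry_mul' he (fun i j => (continuous_const : Continuous fun _ : ℝ => σ i j))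
    have hc2 := cont_entry_mul' hc1
      (fun i j => (continuous_const : Continuous fun _ : ℝ => σᵀ i j))
    exact cont_entry_mul' hc2 he'
  have hcont : ∀ x1 : EuclideanSpace ℝ (Fin n),
      Continuous fun s => Matrix.toEuclideanLin (M s) x1 := by
    intro x1
    have h1 : Continuous fun s => (M s) *ᵥ (WithLp.equiv 2 (Fin n → ℝ)) x1 := by
      apply continuous_pi
      intro i
      simp only [Matrix.mulVec, dotProduct]
      exact continuous_finset_sum _ fun j _ => ((hMcont i j).mul continuous_const)
    have heq : (fun s => Matrix.toEuclideanLin (M s) x1)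
        = fun s => (WithLp.equiv 2 (Fin n → ℝ)).symm
            ((M s) *ᵥ (WithLp.equiv 2 (Fin n → ℝ)) x1) := by
      funext s; rw [Matrix.toEuclideanLin_apply]; rfl
    rw [heq]
    exact (PiLp.continuous_toLp 2 (fun _ : Fin n => ℝ)).comp h1
  have hmain : ∀ x : EuclideanSpace ℝ (Fin n) ×
      Lp (EuclideanSpace ℝ (Fin n)) 2 (volume.restrict (Set.Icc (-d) (0:ℝ))),
      (∫ s in (0:ℝ)..t, S s (Matrix.toEuclideanLin σ (G' (S' s x)), 0)) =
        (Matrix.toEuclideanLin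
          (Matrix.of fun i j => ∫ s in (0:ℝ)..t,
            (NormedSpace.exp (s • a₀) * σ * σᵀ * NormedSpace.exp (s • a₀ᵀ)) i j) x.1,
         0) := by
    intro x
    have hfs : Set.EqOn (fun s => S s (Matrix.toEuclideanLin σ (G' (S' s x)), 0))
        (fun s => (ContinuousLinearMap.inl ℝ (EuclideanSpace ℝ (Fin n))
            (Lp (EuclideanSpace ℝ (Fin n)) 2 (volume.restrict (Set.Icc (-d) (0:ℝ)))))
          (Matrix.toEuclideanLin (M s) x.1))
        (Set.uIcc (0:ℝ) t) := by
      intro s hsmem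
      rw [Set.uIcc_of_le ht] at hsmem
      have hs : 0 ≤ s := hsmem.1
      have harg : Matrix.toEuclideanLin σ (G' (S' s x)) =
          Matrix.toEuclideanLin (σ * σᵀ * NormedSpace.exp (s • a₀ᵀ)) x.1 := by
        rw [hG'x, hS'x s hs, toEuclideanLin_comp', toEuclideanLin_comp']
        congr 2
        rw [← Matrix.exp_transpose, Matrix.transpose_smul]
      show S s (Matrix.toEuclideanLin σ (G' (S' s x)), 0) =
        (ContinuousLinearMap.inl ℝ (EuclideanSpace ℝ (Fin n))
            (Lp (EuclideanSpace ℝ (Fin n)) 2 (volume.restrict (Set.Icc (-d) (0:ℝ)))))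
          (Matrix.toEuclideanLin (M s) x.1)
      have hmat : NormedSpace.exp (s • a₀) * (σ * σᵀ * NormedSpace.exp (s • a₀ᵀ)) = M s := by
        rw [hM]
        simp only [Matrix.mul_assoc]
      rw [harg, keyS s hs _, ContinuousLinearMap.inl_apply, toEuclideanLin_comp', hmat]
    rw [intervalIntegral.integral_congr hfs]
    have hint : IntervalIntegrable (fun s => Matrix.toEuclideanLin (M s) x.1) volume 0 t :=
      (hcont x.1).intervalIntegrable 0 t
    rw [ContinuousLinearMap.intervalIntegral_comp_comm _ hint, ContinuousLinearMap.inl_apply]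
    refine Prod.ext ?_ rfl
    show (∫ s in (0:ℝ)..t, Matrix.toEuclideanLin (M s) x.1) =
      Matrix.toEuclideanLin
          (Matrix.of fun i j => ∫ s in (0:ℝ)..t,
            (NormedSpace.exp (s • a₀) * σ * σᵀ * NormedSpace.exp (s • a₀ᵀ)) i j) x.1
    refine PiLp.ext fun i => ?_
    have hswap := (EuclideanSpace.proj (𝕜 := ℝ) i).intervalIntegral_comp_comm hint
    simp only [PiLp.proj_apply] at hswap
    rw [← hswap]
    have hentry : ∀ s : ℝ, (Matrix.toEuclideanLin (M s) x.1) i = ∑ j, M s i j * x.1 j := by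
      intro s
      simp [Matrix.toEuclideanLin_apply, Matrix.mulVec, dotProduct]
    calc (∫ s in (0:ℝ)..t, (Matrix.toEuclideanLin (M s) x.1) i)
        = ∫ s in (0:ℝ)..t, ∑ j, M s i j * x.1 j := by
          apply intervalIntegral.integral_congr
          intro s _
          exact hentry s
      _ = ∑ j, ∫ s in (0:ℝ)..t, M s i j * x.1 j := by
          apply intervalIntegral.integral_finset_sum
          intro j _
          exact ((hMcont i j).mul continuous_const).intervalIntegrable _ _
      _ = ∑ j, (∫ s in (0:ℝ)..t, M s i j) * x.1 j := by
          refine Finset.sum_congr rfl fun j _ => ?_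
          exact intervalIntegral.integral_mul_const _ _
      _ = (Matrix.toEuclideanLin
          (Matrix.of fun i j => ∫ s in (0:ℝ)..t,
            (NormedSpace.exp (s • a₀) * σ * σᵀ * NormedSpace.exp (s • a₀ᵀ)) i j) x.1) i := by
          simp only [hM]
          simp [Matrix.toEuclideanLin_apply, Matrix.mulVec, dotProduct, Matrix.of_apply]
  refine ⟨hmain, ?_⟩
  rintro p ⟨x, rfl⟩
  simp only [Set.mem_setOf_eq, hmain x]
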